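/- Let F be a non-abelian free group, Δ a decomposition of F, φ a Δ-decomposable quasimorphism, ω a bounded symmetric Δ-continuous 2-cocycle, ζ(g,g',h) = Σ_{j=1}^k φ(g_j)·ω(g_{j+1}⋯g_k g', h) for Δ(g) = (g₁,…,g_k), and η(g,h) = ζ(g,1,h). Then there is a constant C > 0 such that for all g, h, i ∈ F, |φ(g)·ω(h,i) + δ²η(g,h,i) − (ζ(d,h,i) + ζ(d⁻¹, dh, i))| ≤ C, where d is the common 2-path of (g,h). -/

import Mathlib

/-! Common definitions: free groups, reduced products, (bounded) cochains,
decompositions of a free group, Brooks and Rolli quasimorphisms. -/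

section Preamble

variable {α : Type} [DecidableEq α]

/-- Word length of an element of a free group (length of its reduced word). -/
def wlen (g : FreeGroup α) : ℕ := g.toWord.length

/-- A product `g = g₁ ⋯ g_k` is reduced (no cancellation) if the word lengths add up. -/
def ReducedProd (l : List (FreeGroup α)) : Prop :=
  wlen l.prod = (l.map wlen).sum

/-- Inhomogeneous coboundary `δ¹φ(g,h) = φ(g) + φ(h) − φ(gh)`. -/
def d1 (φ : FreeGroup α → ℝ) (g h : FreeGroup α) : ℝ := φ g + φ h - φ (g * h)

/-- Inhomogeneous coboundary `δ²η`. -/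
def d2 (η : FreeGroup α → FreeGroup α → ℝ) (g h i : FreeGroup α) : ℝ :=
  η h i - η (g * h) i + η g (h * i) - η g h

/-- Inhomogeneous coboundary `δ³β`. -/
def d3 (β : FreeGroup α → FreeGroup α → FreeGroup α → ℝ) (g h i j : FreeGroup α) : ℝ :=
  β h i j - β (g * h) i j + β g (h * i) j - β g h (i * j) + β g h i

/-- A quasimorphism on the free group. -/
def IsQuasimorphism (φ : FreeGroup α → ℝ) : Prop :=
  ∃ D > (0 : ℝ), ∀ g h : FreeGroup α, |d1 φ g h| < D

/-- A symmetric map: `φ(g⁻¹) = −φ(g)`. -/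
def IsSymmetricMap (φ : FreeGroup α → ℝ) : Prop :=
  ∀ g : FreeGroup α, φ g⁻¹ = -φ g

/-- Longest common initial sequence of two lists. -/
def commonPrefix {β : Type} [DecidableEq β] : List β → List β → List β
  | a :: as, b :: bs => if a = b then a :: commonPrefix as bs else []
  | _, _ => []

/-- Reversed, entrywise-inverted list: `(g₁, …, g_k) ↦ (g_k⁻¹, …, g₁⁻¹)`. -/
def seqInv (l : List (FreeGroup α)) : List (FreeGroup α) :=
  (l.map fun x => x⁻¹).reverse

/-- `(c̲₁⁻¹)`: the common initial sequence of `Δ(g)` and `Δ(gh)`. -/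
def cSeq1 (D : FreeGroup α → List (FreeGroup α)) (g h : FreeGroup α) : List (FreeGroup α) :=
  commonPrefix (D g) (D (g * h))

/-- `(c̲₂⁻¹)`: the common initial sequence of `Δ(g⁻¹)` and `Δ(h)`. -/
def cSeq2 (D : FreeGroup α → List (FreeGroup α)) (g h : FreeGroup α) : List (FreeGroup α) :=
  commonPrefix (D g⁻¹) (D h)

/-- `(c̲₃⁻¹)`: the common initial sequence of `Δ(h⁻¹)` and `Δ(h⁻¹g⁻¹)`. -/
def cSeq3 (D : FreeGroup α → List (FreeGroup α)) (g h : FreeGroup α) : List (FreeGroup α) :=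
  commonPrefix (D h⁻¹) (D (h⁻¹ * g⁻¹))

/-- `(r̲₁)`: middle part of `Δ(g) = (c̲₁⁻¹)·(r̲₁)·(c̲₂)`. -/
def rSeq1 (D : FreeGroup α → List (FreeGroup α)) (g h : FreeGroup α) : List (FreeGroup α) :=
  ((D g).drop (cSeq1 D g h).length).take
    ((D g).length - (cSeq1 D g h).length - (cSeq2 D g h).length)

/-- `(r̲₂)`: middle part of `Δ(h) = (c̲₂⁻¹)·(r̲₂)·(c̲₃)`. -/
def rSeq2 (D : FreeGroup α → List (FreeGroup α)) (g h : FreeGroup α) : List (FreeGroup α) :=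
  ((D h).drop (cSeq2 D g h).length).take
    ((D h).length - (cSeq2 D g h).length - (cSeq3 D g h).length)

/-- `(r̲₃)`: middle part of `Δ(h⁻¹g⁻¹) = (c̲₃⁻¹)·(r̲₃)·(c̲₁)`. -/
def rSeq3 (D : FreeGroup α → List (FreeGroup α)) (g h : FreeGroup α) : List (FreeGroup α) :=
  ((D (h⁻¹ * g⁻¹)).drop (cSeq3 D g h).length).take
    ((D (h⁻¹ * g⁻¹)).length - (cSeq3 D g h).length - (cSeq1 D g h).length)

/-- A decomposition `Δ` of the free group `F` into pieces `P` (Definition 3.1). -/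
structure Decomp (α : Type) [DecidableEq α] where
  /-- the set of pieces -/
  pieces : Set (FreeGroup α)
  /-- the decomposition map `Δ` -/
  D : FreeGroup α → List (FreeGroup α)
  /-- the uniform bound `R` on the r-parts of `Δ`-triangles -/
  R : ℕ
  R_pos : 0 < R
  pieces_symm : ∀ p ∈ pieces, p⁻¹ ∈ pieces
  one_notin_pieces : (1 : FreeGroup α) ∉ pieces
  mem_pieces : ∀ g : FreeGroup α, ∀ p ∈ D g, p ∈ pieces
  prod_eq : ∀ g : FreeGroup α, (D g).prod = g
  reduced : ∀ g : FreeGroup α, ReducedProd (D g)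
  inv_eq : ∀ g : FreeGroup α, D g⁻¹ = seqInv (D g)
  infix_closed : ∀ (g : FreeGroup α) (l₁ l₂ l₃ : List (FreeGroup α)),
    D g = l₁ ++ l₂ ++ l₃ → D l₂.prod = l₂
  triangle₁ : ∀ g h : FreeGroup α, D g = cSeq1 D g h ++ rSeq1 D g h ++ seqInv (cSeq2 D g h)
  triangle₂ : ∀ g h : FreeGroup α, D h = cSeq2 D g h ++ rSeq2 D g h ++ seqInv (cSeq3 D g h)
  triangle₃ : ∀ g h : FreeGroup α,
    D (h⁻¹ * g⁻¹) = cSeq3 D g h ++ rSeq3 D g h ++ seqInv (cSeq1 D g h)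
  rBound₁ : ∀ g h : FreeGroup α, (rSeq1 D g h).length ≤ R
  rBound₂ : ∀ g h : FreeGroup α, (rSeq2 D g h).length ≤ R
  rBound₃ : ∀ g h : FreeGroup α, (rSeq3 D g h).length ≤ R

/-- The `Δ`-decomposable map `φ_{λ,Δ}(g) = Σ_j λ(g_j)`. -/
def decQM (D : FreeGroup α → List (FreeGroup α)) (lam : FreeGroup α → ℝ)
    (g : FreeGroup α) : ℝ :=
  ((D g).map lam).sum

/-- `φ` is a `Δ`-decomposable quasimorphism (Definition 3.8). -/
def IsDecomposable (dec : Decomp α) (φ : FreeGroup α → ℝ) : Prop :=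
  ∃ lam : FreeGroup α → ℝ,
    (∃ B : ℝ, ∀ p ∈ dec.pieces, |lam p| ≤ B) ∧
    (∀ p ∈ dec.pieces, lam p⁻¹ = -lam p) ∧
    φ = decQM dec.D lam

/-- Agreement (as an extended natural number) of two sequences:
`⊤` if they are equal, otherwise the length of their common initial sequence. -/
def seqAgree {β : Type} [DecidableEq β] (l l' : List β) : ℕ∞ :=
  if l = l' then ⊤ else ((commonPrefix l l').length : ℕ∞)

/-- The quantity `N_Δ((g,h),(g',h'))` measuring how much the `Δ`-triangles of the two
pairs agree around their centres. -/
noncomputable def NDelta (D : FreeGroup α → List (FreeGroup α))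
    (p q : FreeGroup α × FreeGroup α) : ℕ∞ :=
  if p = q then ⊤
  else if rSeq1 D p.1 p.2 = rSeq1 D q.1 q.2 ∧ rSeq2 D p.1 p.2 = rSeq2 D q.1 q.2 ∧
            rSeq3 D p.1 p.2 = rSeq3 D q.1 q.2 then
    min (seqAgree (seqInv (cSeq1 D p.1 p.2)) (seqInv (cSeq1 D q.1 q.2)))
      (min (seqAgree (seqInv (cSeq2 D p.1 p.2)) (seqInv (cSeq2 D q.1 q.2)))
        (seqAgree (seqInv (cSeq3 D p.1 p.2)) (seqInv (cSeq3 D q.1 q.2))))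
  else 0

/-- A bounded symmetric `2`-cocycle `ω` is `Δ`-continuous (Definition 3.12). -/
def DeltaContinuousCocycle (D : FreeGroup α → List (FreeGroup α))
    (ω : FreeGroup α → FreeGroup α → ℝ) : Prop :=
  ∃ s : ℕ → ℝ, (∀ j, 0 ≤ s j) ∧ Summable s ∧
    ∀ p q : FreeGroup α × FreeGroup α, p ≠ q → ∀ N : ℕ, NDelta D p q = (N : ℕ∞) →
      |ω p.1 p.2 - ω q.1 q.2| ≤ s N

/-- A quasimorphism `ψ` is `Δ`-continuous: it is symmetric and `δ¹ψ` is `Δ`-continuous. -/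
def DeltaContinuousQM (D : FreeGroup α → List (FreeGroup α)) (ψ : FreeGroup α → ℝ) : Prop :=
  IsSymmetricMap ψ ∧ IsQuasimorphism ψ ∧ DeltaContinuousCocycle D (d1 ψ)

/-- `ζ`-type sums: `zetaL A (g₁,…,g_k) g' h = Σ_j A(g_j, g_{j+1}⋯g_k·g', h)`. -/
def zetaL (A : FreeGroup α → FreeGroup α → FreeGroup α → ℝ) :
    List (FreeGroup α) → FreeGroup α → FreeGroup α → ℝ
  | [], _, _ => 0
  | p :: rest, g', h => A p (rest.prod * g') h + zetaL A rest g' h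

/-- `ζ(g,g',h) = Σ_j φ(g_j)·ω(g_{j+1}⋯g_k·g', h)` for `Δ(g) = (g₁,…,g_k)`. -/
def zetaD (D : FreeGroup α → List (FreeGroup α)) (φ : FreeGroup α → ℝ)
    (ω : FreeGroup α → FreeGroup α → ℝ) (g g' h : FreeGroup α) : ℝ :=
  zetaL (fun p u v => φ p * ω u v) (D g) g' h

/-- `w` is a subword of `g` (as reduced words). -/
def Subword (w g : FreeGroup α) : Prop :=
  w.toWord <:+: g.toWord

/-- `w` is non self-overlapping: there are no reduced words `x, y` with `x` nontrivial
such that `w = xyx` as a reduced word. -/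
def NonSelfOverlapping (w : FreeGroup α) : Prop :=
  ¬∃ x y : FreeGroup α, x ≠ 1 ∧ w = x * y * x ∧ ReducedProd [x, y, x]

/-- `ν_w(g)`: the number of occurrences of `w` as a subword of the reduced word `g`. -/
def occCount (w g : FreeGroup α) : ℕ :=
  ((List.range (g.toWord.length + 1)).filter
    (fun s => decide ((g.toWord.drop s).take w.toWord.length = w.toWord))).length

/-- The Brooks counting function `φ_w = ν_w − ν_{w⁻¹}`. -/
noncomputable def brooksQM (w : FreeGroup α) (g : FreeGroup α) : ℝ :=
  (occCount w g : ℝ) - (occCount w⁻¹ g : ℝ)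

/-- `φ` is a Brooks counting quasimorphism on some non self-overlapping word. -/
def IsBrooksQM (φ : FreeGroup α → ℝ) : Prop :=
  ∃ w : FreeGroup α, NonSelfOverlapping w ∧ φ = brooksQM w

/-- The interleaved list `(u₁, w^{ε₁}, u₂, …, u_{k−1}, w^{ε_{k−1}}, u_k)` built from
`us = (u₁,…,u_k)` and signs `eps = (ε₁,…,ε_{k−1})`. -/
def wfacList (w : FreeGroup α) : List (FreeGroup α) → List Bool → List (FreeGroup α)
  | [], _ => []
  | [u], _ => [u]
  | u :: us, [] => u :: wfacList w us []
  | u :: us, e :: eps => u :: (if e then w else w⁻¹) :: wfacList w us eps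

/-- `RolliWord l` : `l = ((n₁,m₁),…,(n_k,m_k))` encodes the normal form
`x_{n₁}^{m₁} ⋯ x_{n_k}^{m_k}` (all `m_j ≠ 0`, no consecutive equal indices). -/
def RolliWord {n : ℕ} (l : List (Fin n × ℤ)) : Prop :=
  (∀ p ∈ l, p.2 ≠ 0) ∧ l.Chain' fun p q => p.1 ≠ q.1

/-- The element `x_{n₁}^{m₁} ⋯ x_{n_k}^{m_k}` encoded by `l`. -/
def rolliProd {n : ℕ} (l : List (Fin n × ℤ)) : FreeGroup (Fin n) :=
  (l.map fun p => FreeGroup.of p.1 ^ p.2).prod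

/-- `φ` is a Rolli quasimorphism. -/
def IsRolliQM {n : ℕ} (φ : FreeGroup (Fin n) → ℝ) : Prop :=
  ∃ lam : Fin n → ℤ → ℝ,
    (∀ j, ∃ B : ℝ, ∀ m : ℤ, |lam j m| ≤ B) ∧
    (∀ j m, lam j (-m) = -lam j m) ∧
    φ 1 = 0 ∧
    ∀ l : List (Fin n × ℤ), RolliWord l → φ (rolliProd l) = (l.map fun p => lam p.1 p.2).sum

/-- The list of letters (as group elements) of the reduced word representing `g`. -/
def letters (g : FreeGroup α) : List (FreeGroup α) :=
  g.toWord.map fun p => FreeGroup.mk [p]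

/-- `d` is the common 2-path of `(g,h)`: `g = t₁⁻¹d` and `h = d⁻¹t₂` as reduced words,
with the tripod condition that `gh = t₁⁻¹t₂` is also reduced. -/
def IsCommon2Path (g h d : FreeGroup α) : Prop :=
  ∃ t₁ t₂ : FreeGroup α, g = t₁⁻¹ * d ∧ h = d⁻¹ * t₂ ∧
    ReducedProd [t₁⁻¹, d] ∧ ReducedProd [d⁻¹, t₂] ∧ ReducedProd [t₁⁻¹, t₂]

/-- Case (a) of the alignment of `g, h, i` (Figure 4a). -/
def Align3A (g h i : FreeGroup α) : Prop :=
  ∃ t₁ t₂ t₃ t₄ t₅ : FreeGroup α,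
    g = t₁ * t₂ ∧ h = t₂⁻¹ * t₃ * t₄ ∧ i = t₄⁻¹ * t₅ ∧
    ReducedProd [t₁, t₂] ∧ ReducedProd [t₂⁻¹, t₃, t₄] ∧ ReducedProd [t₄⁻¹, t₅] ∧
    ReducedProd [t₁, t₃, t₅]

/-- Case (b) of the alignment of `g, h, i` (Figure 4b). -/
def Align3B (g h i : FreeGroup α) : Prop :=
  ∃ t₁ t₂ t₃ t₄ t₅ : FreeGroup α,
    g = t₁ * t₂ * t₃ ∧ h = t₃⁻¹ * t₄ ∧ i = t₄⁻¹ * t₂⁻¹ * t₅ ∧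
    ReducedProd [t₁, t₂, t₃] ∧ ReducedProd [t₃⁻¹, t₄] ∧ ReducedProd [t₄⁻¹, t₂⁻¹, t₅] ∧
    ReducedProd [t₁, t₅]

/-- Case (c) of the alignment of `g, h, i` (Figure 4c), with common 3-path `c`. -/
def Align3C (g h i c : FreeGroup α) : Prop :=
  ∃ t₁ t₂ t₃ t₄ : FreeGroup α,
    g = t₁⁻¹ * c * t₂ ∧ h = t₂⁻¹ * c⁻¹ * t₃ ∧ i = t₃⁻¹ * c * t₄ ∧
    ReducedProd [t₁⁻¹, c, t₂] ∧ ReducedProd [t₂⁻¹, c⁻¹, t₃] ∧ ReducedProd [t₃⁻¹, c, t₄] ∧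
    ReducedProd [t₁⁻¹, t₃] ∧ ReducedProd [t₂⁻¹, t₄]

/-- `c` is the common 3-path of `(g,h,i)`: `c` in case (c), the identity otherwise. -/
def IsCommon3Path (g h i c : FreeGroup α) : Prop :=
  Align3C g h i c ∨ (c = 1 ∧ (Align3A g h i ∨ Align3B g h i))

set_option linter.unusedSectionVars false
namespace StmtAux

lemma prefix_cons {β : Type} {a : β} {l l' : List β} (h : l <+: l') :
    (a :: l) <+: (a :: l') := by
  obtain ⟨t, ht⟩ := h
  exact ⟨t, by rw [List.cons_append, ht]⟩

/-! ### word lemmas -/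

lemma wlen_one : wlen (1 : FreeGroup α) = 0 := by simp [wlen, FreeGroup.toWord_one]

lemma wlen_eq_zero {x : FreeGroup α} : wlen x = 0 ↔ x = 1 := by
  rw [wlen, List.length_eq_zero_iff, FreeGroup.toWord_eq_nil_iff]

lemma wlen_inv (x : FreeGroup α) : wlen x⁻¹ = wlen x := by
  simp [wlen, FreeGroup.toWord_inv, FreeGroup.invRev_length]

lemma wlen_mul_le (x y : FreeGroup α) : wlen (x * y) ≤ wlen x + wlen y := by
  have := (FreeGroup.toWord_mul_sublist x y).length_le
  simpa [wlen] using this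

lemma toWord_mul_of_wlen {x y : FreeGroup α} (h : wlen (x * y) = wlen x + wlen y) :
    (x * y).toWord = x.toWord ++ y.toWord := by
  have hsl := FreeGroup.toWord_mul_sublist x y
  refine hsl.eq_of_length ?_
  simpa [wlen] using h

/-- head-clash: if `x⁻¹ * y` is a reduced product and the reduced words of `x` and `y`
start with the same letter, contradiction. -/
lemma head_clash {x y : FreeGroup α} {c : α × Bool} {xs ys : List (α × Bool)}
    (h : wlen (x⁻¹ * y) = wlen x + wlen y)
    (hxs : x.toWord = c :: xs) (hys : y.toWord = c :: ys) : False := by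
  have h' : wlen (x⁻¹ * y) = wlen x⁻¹ + wlen y := by rw [wlen_inv]; exact h
  have hW : (x⁻¹ * y).toWord = x⁻¹.toWord ++ y.toWord := toWord_mul_of_wlen h'
  have hinv : x⁻¹.toWord = FreeGroup.invRev x.toWord := FreeGroup.toWord_inv x
  have hred : FreeGroup.reduce ((x⁻¹ * y).toWord) = (x⁻¹ * y).toWord :=
    FreeGroup.reduce_toWord _
  rw [hW, hinv, hxs, hys] at hred
  have hiv : FreeGroup.invRev (c :: xs) =
      (FreeGroup.invRev xs) ++ [(c.1, !c.2)] := by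
    simp [FreeGroup.invRev]
  rw [hiv] at hred
  have hred' : FreeGroup.reduce
      ((FreeGroup.invRev xs) ++ [(c.1, !c.2)] ++ c :: ys)
      = FreeGroup.invRev xs ++ (c.1, !c.2) :: (c.1, !(!c.2)) :: ys := by
    rw [hred]; simp
  exact FreeGroup.reduce.not hred'

/-! ### reduced-product lemmas -/

lemma wlen_prod_le (l : List (FreeGroup α)) : wlen l.prod ≤ (l.map wlen).sum := by
  induction l with
  | nil => simp [wlen_one]
  | cons p t ih =>
      simp only [List.prod_cons, List.map_cons, List.sum_cons]
      exact le_trans (wlen_mul_le _ _) (by omega)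

lemma reducedProd_append {l₁ l₂ : List (FreeGroup α)} (h : ReducedProd (l₁ ++ l₂)) :
    ReducedProd l₁ ∧ ReducedProd l₂ ∧
      wlen (l₁.prod * l₂.prod) = wlen l₁.prod + wlen l₂.prod := by
  have h1 := wlen_prod_le l₁
  have h2 := wlen_prod_le l₂
  have h3 := wlen_mul_le l₁.prod l₂.prod
  have hs : wlen ((l₁ ++ l₂).prod) = (l₁.map wlen).sum + (l₂.map wlen).sum := by
    unfold ReducedProd at h
    rwa [List.map_append, List.sum_append] at h
  rw [List.prod_append] at hs
  constructor
  · unfold ReducedProd; omega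
  constructor
  · unfold ReducedProd; omega
  · omega

lemma toWord_prod_append {l₁ l₂ : List (FreeGroup α)} (h : ReducedProd (l₁ ++ l₂)) :
    ((l₁ ++ l₂).prod).toWord = (l₁.prod).toWord ++ (l₂.prod).toWord := by
  rw [List.prod_append]
  exact toWord_mul_of_wlen (reducedProd_append h).2.2

/-! ### seqInv lemmas -/

@[simp] lemma seqInv_nil : seqInv ([] : List (FreeGroup α)) = [] := rfl

lemma seqInv_append (l₁ l₂ : List (FreeGroup α)) :
    seqInv (l₁ ++ l₂) = seqInv l₂ ++ seqInv l₁ := by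
  simp [seqInv]

lemma seqInv_seqInv (l : List (FreeGroup α)) : seqInv (seqInv l) = l := by
  simp [seqInv, List.map_reverse, Function.comp_def]

lemma seqInv_length (l : List (FreeGroup α)) : (seqInv l).length = l.length := by
  simp [seqInv]

lemma seqInv_prod (l : List (FreeGroup α)) : (seqInv l).prod = l.prod⁻¹ := by
  rw [seqInv, ← List.prod_inv_reverse]

lemma seqInv_cons (p : FreeGroup α) (l : List (FreeGroup α)) :
    seqInv (p :: l) = seqInv l ++ [p⁻¹] := by
  simp [seqInv]

/-! ### commonPrefix lemmas -/

lemma commonPrefix_prefix_left {β : Type} [DecidableEq β] :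
    ∀ l₁ l₂ : List β, commonPrefix l₁ l₂ <+: l₁
  | a :: as, b :: bs => by
      rw [commonPrefix]
      split
      · exact prefix_cons (commonPrefix_prefix_left as bs)
      · exact List.nil_prefix
  | [], _ => List.nil_prefix
  | _ :: _, [] => List.nil_prefix

lemma commonPrefix_prefix_right {β : Type} [DecidableEq β] :
    ∀ l₁ l₂ : List β, commonPrefix l₁ l₂ <+: l₂
  | a :: as, b :: bs => by
      rw [commonPrefix]
      split
      · rename_i hab
        subst hab
        exact prefix_cons (commonPrefix_prefix_right as bs)
      · exact List.nil_prefix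
  | [], l₂ => List.nil_prefix
  | _ :: _, [] => List.nil_prefix

lemma prefix_commonPrefix {β : Type} [DecidableEq β] :
    ∀ {π l₁ l₂ : List β}, π <+: l₁ → π <+: l₂ → π <+: commonPrefix l₁ l₂ := by
  intro π
  induction π with
  | nil => intro _ _ _ _; exact List.nil_prefix
  | cons a π ih =>
      intro l₁ l₂ h₁ h₂
      obtain ⟨t₁, ht₁⟩ := h₁
      obtain ⟨t₂, ht₂⟩ := h₂
      subst ht₁; subst ht₂
      rw [List.cons_append, List.cons_append, commonPrefix, if_pos rfl]
      exact prefix_cons (ih ⟨t₁, rfl⟩ ⟨t₂, rfl⟩)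

end StmtAux

namespace StmtAux

section Zeta
variable {α : Type} [DecidableEq α]
variable (φ : FreeGroup α → ℝ) (ω : FreeGroup α → FreeGroup α → ℝ)

@[simp] lemma zetaL_nil (g' i : FreeGroup α) :
    zetaL (fun p u v => φ p * ω u v) [] g' i = 0 := rfl

lemma zetaL_cons (p : FreeGroup α) (rest : List (FreeGroup α)) (g' i : FreeGroup α) :
    zetaL (fun p u v => φ p * ω u v) (p :: rest) g' i =
      φ p * ω (rest.prod * g') i + zetaL (fun p u v => φ p * ω u v) rest g' i := rfl

lemma zetaL_append (l₁ l₂ : List (FreeGroup α)) (g' i : FreeGroup α) :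
    zetaL (fun p u v => φ p * ω u v) (l₁ ++ l₂) g' i =
      zetaL (fun p u v => φ p * ω u v) l₁ (l₂.prod * g') i +
        zetaL (fun p u v => φ p * ω u v) l₂ g' i := by
  induction l₁ with
  | nil => simp
  | cons p t ih =>
      rw [List.cons_append, zetaL_cons, zetaL_cons, ih, List.prod_append, mul_assoc]
      ring

lemma zetaL_bound {B C : ℝ} (hC : 0 ≤ C) {l : List (FreeGroup α)}
    (hB : ∀ p ∈ l, |φ p| ≤ B) (hω : ∀ u v : FreeGroup α, |ω u v| ≤ C)
    (g' i : FreeGroup α) :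
    |zetaL (fun p u v => φ p * ω u v) l g' i| ≤ l.length * (B * C) := by
  induction l with
  | nil => simp
  | cons p t ih =>
      rw [zetaL_cons]
      have h1 : |φ p * ω (t.prod * g') i| ≤ B * C := by
        rw [abs_mul]
        have hBp := hB p (by simp)
        have := hω (t.prod * g') i
        have h0 : (0:ℝ) ≤ |φ p| := abs_nonneg _
        nlinarith [abs_nonneg (ω (t.prod * g') i)]
      have h2 := ih (fun p hp => hB p (by simp [hp]))
      calc |φ p * ω (t.prod * g') i + zetaL (fun p u v => φ p * ω u v) t g' i|
          ≤ |φ p * ω (t.prod * g') i| + |zetaL (fun p u v => φ p * ω u v) t g' i| :=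
            abs_add_le _ _
        _ ≤ B * C + t.length * (B * C) := add_le_add h1 h2
        _ = (p :: t).length * (B * C) := by simp [List.length_cons]; ring

/-- The paired sum `Σ_j φ(x_j)(ω(σ_j h, i) − ω(x_j σ_j h, i))`. -/
def pairSum (h i : FreeGroup α) : List (FreeGroup α) → ℝ
  | [] => 0
  | p :: rest =>
      φ p * (ω (rest.prod * h) i - ω (p * (rest.prod * h)) i) + pairSum h i rest

lemma pairSum_eq {l : List (FreeGroup α)} (hsym : ∀ p ∈ l, φ p⁻¹ = -φ p)
    (h i : FreeGroup α) :
    zetaL (fun p u v => φ p * ω u v) l h i +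
      zetaL (fun p u v => φ p * ω u v) (seqInv l) (l.prod * h) i =
    pairSum φ ω h i l := by
  induction l with
  | nil => simp [pairSum]
  | cons p rest ih =>
      rw [pairSum, seqInv_cons, zetaL_append, zetaL_cons, zetaL_cons, zetaL_nil]
      have harg : (p⁻¹ : FreeGroup α) * ((p :: rest).prod * h) = rest.prod * h := by
        rw [List.prod_cons, ← mul_assoc, ← mul_assoc, inv_mul_cancel, one_mul]
      have harg2 : (List.prod [] : FreeGroup α) * ((p :: rest).prod * h)
          = p * (rest.prod * h) := by
        rw [List.prod_nil, one_mul, List.prod_cons, mul_assoc]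
      rw [List.prod_singleton, harg, harg2]
      have hp := hsym p (by simp)
      rw [hp, ← ih (fun q hq => hsym q (by simp [hq]))]
      ring

lemma pairSum_append_bound {B C : ℝ} (hB0 : 0 ≤ B) (hC : 0 ≤ C)
    {l₁ l₂ : List (FreeGroup α)} (hB : ∀ p ∈ l₁, |φ p| ≤ B)
    (hω : ∀ u v : FreeGroup α, |ω u v| ≤ C) (h i : FreeGroup α) :
    |pairSum φ ω h i (l₁ ++ l₂) - pairSum φ ω h i l₂| ≤ l₁.length * (2 * B * C) := by
  induction l₁ with
  | nil => simp [pairSum]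
  | cons p t ih =>
      rw [List.cons_append, pairSum]
      have h1 : |φ p * (ω ((t ++ l₂).prod * h) i - ω (p * ((t ++ l₂).prod * h)) i)|
          ≤ 2 * B * C := by
        rw [abs_mul]
        have hBp := hB p (by simp)
        have e1 := hω ((t ++ l₂).prod * h) i
        have e2 := hω (p * ((t ++ l₂).prod * h)) i
        have h3 : |ω ((t ++ l₂).prod * h) i - ω (p * ((t ++ l₂).prod * h)) i| ≤ 2 * C := by
          calc |ω ((t ++ l₂).prod * h) i - ω (p * ((t ++ l₂).prod * h)) i|
              ≤ |ω ((t ++ l₂).prod * h) i| + |ω (p * ((t ++ l₂).prod * h)) i| :=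
                abs_sub _ _
            _ ≤ 2 * C := by linarith
        have h0 : (0:ℝ) ≤ |φ p| := abs_nonneg _
        nlinarith [abs_nonneg (ω ((t ++ l₂).prod * h) i - ω (p * ((t ++ l₂).prod * h)) i)]
      have h2 := ih (fun q hq => hB q (by simp [hq]))
      calc |φ p * (ω ((t ++ l₂).prod * h) i - ω (p * ((t ++ l₂).prod * h)) i) +
              pairSum φ ω h i (t ++ l₂) - pairSum φ ω h i l₂|
          ≤ |φ p * (ω ((t ++ l₂).prod * h) i - ω (p * ((t ++ l₂).prod * h)) i)| +
              |pairSum φ ω h i (t ++ l₂) - pairSum φ ω h i l₂| := by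
            have := abs_add_le (φ p * (ω ((t ++ l₂).prod * h) i - ω (p * ((t ++ l₂).prod * h)) i))
              (pairSum φ ω h i (t ++ l₂) - pairSum φ ω h i l₂)
            calc _ = |φ p * (ω ((t ++ l₂).prod * h) i - ω (p * ((t ++ l₂).prod * h)) i) +
                (pairSum φ ω h i (t ++ l₂) - pairSum φ ω h i l₂)| := by ring_nf
              _ ≤ _ := this
        _ ≤ 2 * B * C + t.length * (2 * B * C) := add_le_add h1 h2
        _ = (p :: t).length * (2 * B * C) := by simp [List.length_cons]; ring

lemma zetaL_cocycle (hcoc : ∀ u v w : FreeGroup α, ω u (v * w) - ω u v = ω (u * v) w - ω v w)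
    (l : List (FreeGroup α)) (h i : FreeGroup α) :
    zetaL (fun p u v => φ p * ω u v) l 1 (h * i) -
      zetaL (fun p u v => φ p * ω u v) l 1 h =
    zetaL (fun p u v => φ p * ω u v) l h i - ((l.map φ).sum) * ω h i := by
  induction l with
  | nil => simp
  | cons p rest ih =>
      rw [zetaL_cons, zetaL_cons, zetaL_cons, List.map_cons, List.sum_cons]
      have key : ω (rest.prod * 1) (h * i) - ω (rest.prod * 1) h =
          ω (rest.prod * h) i - ω h i := by
        simp only [mul_one]
        exact hcoc rest.prod h i
      have lhs :
          φ p * ω (rest.prod * 1) (h * i) +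
              zetaL (fun p u v => φ p * ω u v) rest 1 (h * i) -
            (φ p * ω (rest.prod * 1) h +
              zetaL (fun p u v => φ p * ω u v) rest 1 h) =
          φ p * (ω (rest.prod * 1) (h * i) - ω (rest.prod * 1) h) +
            (zetaL (fun p u v => φ p * ω u v) rest 1 (h * i) -
              zetaL (fun p u v => φ p * ω u v) rest 1 h) := by ring
      rw [lhs, key, ih]
      ring

end Zeta
end StmtAux


namespace StmtAux
section DecompAux
variable {α : Type} [DecidableEq α] (dec : Decomp α)

lemma D_piece {x p : FreeGroup α} (hp : p ∈ dec.D x) : dec.D p = [p] := by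
  obtain ⟨s, t, hst⟩ := List.append_of_mem hp
  have h2 : dec.D x = s ++ [p] ++ t := by rw [hst]; simp
  have h3 := dec.infix_closed x s [p] t h2
  simpa using h3

lemma piece_ne_one {x p : FreeGroup α} (hp : p ∈ dec.D x) : p ≠ 1 :=
  fun h => dec.one_notin_pieces (h ▸ dec.mem_pieces x p hp)

lemma piece_toWord_ne_nil {x p : FreeGroup α} (hp : p ∈ dec.D x) : p.toWord ≠ [] :=
  fun h => piece_ne_one dec hp (FreeGroup.toWord_eq_nil_iff.mp h)

lemma toWord_D_split {x : FreeGroup α} {l₁ l₂ : List (FreeGroup α)}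
    (hsplit : dec.D x = l₁ ++ l₂) :
    x.toWord = (l₁.prod).toWord ++ (l₂.prod).toWord ∧ l₁.prod * l₂.prod = x := by
  have RP : ReducedProd (l₁ ++ l₂) := by rw [← hsplit]; exact dec.reduced x
  have hprod : l₁.prod * l₂.prod = x := by
    rw [← List.prod_append, ← hsplit, dec.prod_eq]
  refine ⟨?_, hprod⟩
  rw [← hprod, ← List.prod_append]
  exact toWord_prod_append RP

lemma reducedPair {a b : FreeGroup α} (h : ReducedProd [a, b]) :
    wlen (a * b) = wlen a + wlen b := by
  unfold ReducedProd at h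
  simpa using h

lemma commonPrefix_D_nil {x y : FreeGroup α}
    (hred : wlen (x⁻¹ * y) = wlen x + wlen y) :
    commonPrefix (dec.D x) (dec.D y) = [] := by
  cases hx : dec.D x with
  | nil => rfl
  | cons p as =>
    cases hy : dec.D y with
    | nil => rfl
    | cons q bs =>
      rw [commonPrefix]
      split
      · rename_i hpq
        exfalso
        subst hpq
        have hxw := (toWord_D_split dec (l₁ := [p]) (l₂ := as) (by simpa using hx)).1
        have hyw := (toWord_D_split dec (l₁ := [p]) (l₂ := bs) (by simpa using hy)).1
        simp only [List.prod_singleton] at hxw hyw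
        have hpne : p.toWord ≠ [] :=
          piece_toWord_ne_nil dec (x := x) (by rw [hx]; exact List.mem_cons_self)
        obtain ⟨c, ps, hps⟩ := List.exists_cons_of_ne_nil hpne
        exact head_clash hred (by rw [hxw, hps]; rfl) (by rw [hyw, hps]; rfl)
      · rfl

lemma tail_decomp {g h d t₁ t₂ : FreeGroup α}
    (h1 : g = t₁⁻¹ * d) (h2 : h = d⁻¹ * t₂)
    (hr1 : ReducedProd [t₁⁻¹, d]) (hr2 : ReducedProd [d⁻¹, t₂])
    (hr3 : ReducedProd [t₁⁻¹, t₂]) :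
    ∃ F F' G : List (FreeGroup α),
      dec.D d = F ++ G ∧ seqInv (cSeq2 dec.D g h) = F' ++ G ∧
      F.length ≤ 2 * dec.R ∧ F'.length ≤ 2 * dec.R := by
  classical
  -- basic reduced equalities
  have w1 : wlen (t₁⁻¹ * d) = wlen t₁ + wlen d := by
    have := reducedPair (a := t₁⁻¹) (b := d) hr1; rwa [wlen_inv] at this
  have w2 : wlen (d⁻¹ * t₂) = wlen d + wlen t₂ := by
    have := reducedPair (a := d⁻¹) (b := t₂) hr2; rwa [wlen_inv] at this
  have w3 : wlen (t₁⁻¹ * t₂) = wlen t₁ + wlen t₂ := by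
    have := reducedPair (a := t₁⁻¹) (b := t₂) hr3; rwa [wlen_inv] at this
  have n1 : commonPrefix (dec.D t₁) (dec.D d) = [] := commonPrefix_D_nil dec w1
  have n2 : commonPrefix (dec.D t₁) (dec.D t₂) = [] := commonPrefix_D_nil dec w3
  have e1 : cSeq2 dec.D t₁⁻¹ d = [] := by
    unfold cSeq2; rw [inv_inv]; exact n1
  have e2 : cSeq2 dec.D t₁⁻¹ t₂ = [] := by
    unfold cSeq2; rw [inv_inv]; exact n2
  have hg' : t₁⁻¹ * d = g := h1.symm
  have hgh : t₁⁻¹ * t₂ = g * h := by rw [h1, h2]; group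
  -- triangle for (t₁⁻¹, d)
  have T1 : dec.D t₁⁻¹ = cSeq1 dec.D t₁⁻¹ d ++ rSeq1 dec.D t₁⁻¹ d := by
    have := dec.triangle₁ t₁⁻¹ d
    rwa [e1, seqInv_nil, List.append_nil] at this
  have T2 : dec.D d = rSeq2 dec.D t₁⁻¹ d ++ seqInv (cSeq3 dec.D t₁⁻¹ d) := by
    have := dec.triangle₂ t₁⁻¹ d
    rwa [e1, List.nil_append] at this
  have hginv : d⁻¹ * t₁⁻¹⁻¹ = g⁻¹ := by rw [h1]; group
  have T3 : dec.D g⁻¹ = cSeq3 dec.D t₁⁻¹ d ++ rSeq3 dec.D t₁⁻¹ d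
      ++ seqInv (cSeq1 dec.D t₁⁻¹ d) := by
    have := dec.triangle₃ t₁⁻¹ d
    rwa [hginv] at this
  have Dg : dec.D g = (cSeq1 dec.D t₁⁻¹ d ++ seqInv (rSeq3 dec.D t₁⁻¹ d))
      ++ seqInv (cSeq3 dec.D t₁⁻¹ d) := by
    have hDg : dec.D g = seqInv (dec.D g⁻¹) := by rw [dec.inv_eq g, seqInv_seqInv]
    rw [hDg, T3, seqInv_append, seqInv_append, seqInv_seqInv, List.append_assoc]
  -- triangle for (t₁⁻¹, t₂)
  have T4 : dec.D t₁⁻¹ = cSeq1 dec.D t₁⁻¹ t₂ ++ rSeq1 dec.D t₁⁻¹ t₂ := by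
    have := dec.triangle₁ t₁⁻¹ t₂
    rwa [e2, seqInv_nil, List.append_nil] at this
  -- prefix facts
  have p1 : cSeq1 dec.D t₁⁻¹ d <+: dec.D t₁⁻¹ := commonPrefix_prefix_left _ _
  have p1g : cSeq1 dec.D t₁⁻¹ d <+: dec.D g := by
    unfold cSeq1
    rw [hg']
    exact commonPrefix_prefix_right _ _
  have p2 : cSeq1 dec.D t₁⁻¹ t₂ <+: dec.D t₁⁻¹ := commonPrefix_prefix_left _ _
  have p2gh : cSeq1 dec.D t₁⁻¹ t₂ <+: dec.D (g * h) := by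
    unfold cSeq1
    rw [hgh]
    exact commonPrefix_prefix_right _ _
  have hc1len : (cSeq1 dec.D t₁⁻¹ d).length + dec.R ≥ (dec.D t₁⁻¹).length := by
    have hl := congrArg List.length T1
    rw [List.length_append] at hl
    have := dec.rBound₁ t₁⁻¹ d
    omega
  have hc2len : (cSeq1 dec.D t₁⁻¹ t₂).length + dec.R ≥ (dec.D t₁⁻¹).length := by
    have hl := congrArg List.length T4
    rw [List.length_append] at hl
    have := dec.rBound₁ t₁⁻¹ t₂
    omega
  -- lower bound for a := cSeq1 g h
  have halb : (dec.D t₁⁻¹).length ≤ (cSeq1 dec.D g h).length + dec.R := by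
    unfold cSeq1
    rcases le_total (cSeq1 dec.D t₁⁻¹ d).length (cSeq1 dec.D t₁⁻¹ t₂).length with hle | hle
    · have hππ : cSeq1 dec.D t₁⁻¹ d <+: cSeq1 dec.D t₁⁻¹ t₂ :=
        List.prefix_of_prefix_length_le p1 p2 hle
      have hcp : cSeq1 dec.D t₁⁻¹ d <+: commonPrefix (dec.D g) (dec.D (g * h)) :=
        prefix_commonPrefix p1g (hππ.trans p2gh)
      have := hcp.length_le
      omega
    · have hππ : cSeq1 dec.D t₁⁻¹ t₂ <+: cSeq1 dec.D t₁⁻¹ d :=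
        List.prefix_of_prefix_length_le p2 p1 hle
      have hcp : cSeq1 dec.D t₁⁻¹ t₂ <+: commonPrefix (dec.D g) (dec.D (g * h)) :=
        prefix_commonPrefix (hππ.trans p1g) p2gh
      have := hcp.length_le
      omega
  -- Claim U : |cSeq1 g h| ≤ |X|
  have hag : cSeq1 dec.D g h <+: dec.D g := commonPrefix_prefix_left _ _
  have hagh : cSeq1 dec.D g h <+: dec.D (g * h) := commonPrefix_prefix_right _ _
  have hU : (cSeq1 dec.D g h).length
      ≤ (cSeq1 dec.D t₁⁻¹ d ++ seqInv (rSeq3 dec.D t₁⁻¹ d)).length := by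
    by_contra hU
    push_neg at hU
    cases hG : seqInv (cSeq3 dec.D t₁⁻¹ d) with
    | nil =>
        have hDgX : dec.D g = cSeq1 dec.D t₁⁻¹ d ++ seqInv (rSeq3 dec.D t₁⁻¹ d) := by
          rw [Dg, hG, List.append_nil]
        have hlen := hag.length_le
        rw [hDgX] at hlen
        omega
    | cons p₀ G₀' =>
        have hsplit1 : dec.D g =
            ((cSeq1 dec.D t₁⁻¹ d ++ seqInv (rSeq3 dec.D t₁⁻¹ d)) ++ [p₀]) ++ G₀' := by
          rw [Dg, hG]; simp
        have hπ₁g : ((cSeq1 dec.D t₁⁻¹ d ++ seqInv (rSeq3 dec.D t₁⁻¹ d)) ++ [p₀])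
            <+: dec.D g := ⟨G₀', hsplit1.symm⟩
        have hπ₁a : ((cSeq1 dec.D t₁⁻¹ d ++ seqInv (rSeq3 dec.D t₁⁻¹ d)) ++ [p₀])
            <+: cSeq1 dec.D g h := by
          refine List.prefix_of_prefix_length_le hπ₁g hag ?_
          rw [List.length_append, List.length_singleton]
          omega
        obtain ⟨rest, hrest⟩ := hπ₁a.trans hagh
        -- word-level data
        have s1 := toWord_D_split dec hsplit1
        have s2 := toWord_D_split dec Dg
        have s3 := toWord_D_split dec hrest.symm
        have s4 := toWord_D_split dec T2
        have s5 : dec.D d = (rSeq2 dec.D t₁⁻¹ d ++ [p₀]) ++ G₀' := by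
          rw [T2, hG]; simp
        have s6 := toWord_D_split dec s5
        -- reduced splitting of the prefix (X ++ [p₀])
        have RPg : ReducedProd
            (((cSeq1 dec.D t₁⁻¹ d ++ seqInv (rSeq3 dec.D t₁⁻¹ d)) ++ [p₀]) ++ G₀') := by
          rw [← hsplit1]; exact dec.reduced g
        have sX : (((cSeq1 dec.D t₁⁻¹ d ++ seqInv (rSeq3 dec.D t₁⁻¹ d)) ++ [p₀]).prod).toWord
            = ((cSeq1 dec.D t₁⁻¹ d ++ seqInv (rSeq3 dec.D t₁⁻¹ d)).prod).toWord
              ++ p₀.toWord := by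
          have := toWord_prod_append (reducedProd_append RPg).1
          simpa using this
        have RPd : ReducedProd ((rSeq2 dec.D t₁⁻¹ d ++ [p₀]) ++ G₀') := by
          rw [← s5]; exact dec.reduced d
        have sΔ : (((rSeq2 dec.D t₁⁻¹ d ++ [p₀])).prod).toWord
            = ((rSeq2 dec.D t₁⁻¹ d).prod).toWord ++ p₀.toWord := by
          have := toWord_prod_append (reducedProd_append RPd).1
          simpa using this
        -- global word decompositions
        have hWgh : (g * h).toWord = (t₁⁻¹).toWord ++ t₂.toWord := by
          rw [← hgh]
          refine toWord_mul_of_wlen ?_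
          rw [wlen_inv]; exact w3
        have hWg2 : g.toWord = (t₁⁻¹).toWord ++ d.toWord := by
          rw [← hg']
          refine toWord_mul_of_wlen ?_
          rw [wlen_inv]; exact w1
        have hXW : (((cSeq1 dec.D t₁⁻¹ d ++ seqInv (rSeq3 dec.D t₁⁻¹ d)).prod)).toWord
            = (t₁⁻¹).toWord ++ ((rSeq2 dec.D t₁⁻¹ d).prod).toWord := by
          apply List.append_cancel_right
            (bs := ((seqInv (cSeq3 dec.D t₁⁻¹ d)).prod).toWord)
          rw [← s2.1, hWg2, s4.1, List.append_assoc]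
        -- prefix comparison inside W t₂
        have hpref : (((cSeq1 dec.D t₁⁻¹ d ++ seqInv (rSeq3 dec.D t₁⁻¹ d)) ++ [p₀]).prod).toWord
            <+: (g * h).toWord := ⟨(rest.prod).toWord, s3.1.symm⟩
        rw [hWgh, sX, hXW] at hpref
        have hpref2 : ((rSeq2 dec.D t₁⁻¹ d).prod).toWord ++ p₀.toWord <+: t₂.toWord := by
          rw [List.append_assoc] at hpref
          exact (List.prefix_append_right_inj _).mp hpref
        have hp₀mem : p₀ ∈ dec.D d := by
          rw [s5]; simp
        have hp₀ne : p₀.toWord ≠ [] := piece_toWord_ne_nil dec hp₀mem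
        have hune : ((rSeq2 dec.D t₁⁻¹ d).prod).toWord ++ p₀.toWord ≠ [] :=
          List.append_ne_nil_of_right_ne_nil _ hp₀ne
        obtain ⟨c, u', hu⟩ := List.exists_cons_of_ne_nil hune
        have hWd : d.toWord = c :: (u' ++ ((G₀'.prod)).toWord) := by
          rw [s6.1, sΔ, hu]; simp
        obtain ⟨v, hv⟩ := hpref2
        have hWt₂ : t₂.toWord = c :: (u' ++ v) := by
          rw [← hv, hu]; simp
        exact head_clash w2 hWd hWt₂
  -- length bookkeeping
  have DgT : dec.D g = cSeq1 dec.D g h ++ rSeq1 dec.D g h ++ seqInv (cSeq2 dec.D g h) :=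
    dec.triangle₁ g h
  have len1 : (cSeq1 dec.D g h).length + (rSeq1 dec.D g h).length
      + (seqInv (cSeq2 dec.D g h)).length
      = (cSeq1 dec.D t₁⁻¹ d ++ seqInv (rSeq3 dec.D t₁⁻¹ d)).length
        + (seqInv (cSeq3 dec.D t₁⁻¹ d)).length := by
    have e := congrArg List.length DgT
    rw [Dg] at e
    simp only [List.length_append] at e ⊢
    omega
  have hrR : (rSeq1 dec.D g h).length ≤ dec.R := dec.rBound₁ g h
  have hΔR : (rSeq2 dec.D t₁⁻¹ d).length ≤ dec.R := dec.rBound₂ t₁⁻¹ d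
  have hXlen : (cSeq1 dec.D t₁⁻¹ d ++ seqInv (rSeq3 dec.D t₁⁻¹ d)).length
      ≤ (dec.D t₁⁻¹).length + dec.R := by
    rw [List.length_append, seqInv_length]
    have := p1.length_le
    have := dec.rBound₃ t₁⁻¹ d
    omega
  -- |G₀| ≤ |b'| + R  and  |b'| ≤ |G₀| + 2R
  have key1 : (seqInv (cSeq3 dec.D t₁⁻¹ d)).length
      ≤ (seqInv (cSeq2 dec.D g h)).length + dec.R := by omega
  have key2 : (seqInv (cSeq2 dec.D g h)).length
      ≤ (seqInv (cSeq3 dec.D t₁⁻¹ d)).length + 2 * dec.R := by omega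
  -- suffix comparison
  have sb' : seqInv (cSeq2 dec.D g h) <:+ dec.D g :=
    ⟨cSeq1 dec.D g h ++ rSeq1 dec.D g h, by rw [DgT]⟩
  have sG₀ : seqInv (cSeq3 dec.D t₁⁻¹ d) <:+ dec.D g :=
    ⟨cSeq1 dec.D t₁⁻¹ d ++ seqInv (rSeq3 dec.D t₁⁻¹ d), Dg.symm⟩
  rcases List.suffix_or_suffix_of_suffix sb' sG₀ with hcase | hcase
  · obtain ⟨F₂, hF₂⟩ := hcase
    refine ⟨rSeq2 dec.D t₁⁻¹ d ++ F₂, [], seqInv (cSeq2 dec.D g h),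
      by rw [T2, ← hF₂, List.append_assoc], by simp, ?_, by simp⟩
    have hlF₂ := congrArg List.length hF₂
    rw [List.length_append] at hlF₂
    rw [List.length_append]
    omega
  · obtain ⟨F', hF'⟩ := hcase
    refine ⟨rSeq2 dec.D t₁⁻¹ d, F', seqInv (cSeq3 dec.D t₁⁻¹ d), T2, hF'.symm, by omega, ?_⟩
    have hlF' := congrArg List.length hF'
    rw [List.length_append] at hlF'
    omega

end DecompAux
end StmtAux

end Preamble


/-- Proposition 4.6: `φ(g)·ω(h,i) + δ²η(g,h,i)` is uniformly close to
`ζ(d,h,i) + ζ(d⁻¹, dh, i)` where `d` is the common 2-path of `(g,h)`. -/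
theorem close_to_two_path_sum {α : Type} [Fintype α] [DecidableEq α]
    (hab : ∃ a b : α, a ≠ b) (dec : Decomp α)
    (φ : FreeGroup α → ℝ) (ω : FreeGroup α → FreeGroup α → ℝ)
    (hφ : IsDecomposable dec φ)
    (hω : ∃ ψ : FreeGroup α → ℝ, IsSymmetricMap ψ ∧ IsQuasimorphism ψ ∧
      ω = fun g h => d1 ψ g h)
    (hωbd : ∃ C : ℝ, ∀ g h, |ω g h| ≤ C)
    (hωc : DeltaContinuousCocycle dec.D ω) :
    ∃ C > (0 : ℝ), ∀ g h i d : FreeGroup α, IsCommon2Path g h d →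
      |φ g * ω h i + d2 (fun a b => zetaD dec.D φ ω a 1 b) g h i -
        (zetaD dec.D φ ω d h i + zetaD dec.D φ ω d⁻¹ (d * h) i)| ≤ C := by
  classical
  obtain ⟨lam, ⟨B, hB⟩, hlamsym, hφeq⟩ := hφ
  obtain ⟨ψ, hψsym, hψqm, hωeq⟩ := hω
  obtain ⟨Cw, hCw⟩ := hωbd
  set B' : ℝ := max B 0 with hB'def
  set C' : ℝ := max Cw 0 with hC'def
  have hB'0 : (0:ℝ) ≤ B' := le_max_right _ _
  have hC'0 : (0:ℝ) ≤ C' := le_max_right _ _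
  have hωle : ∀ u v : FreeGroup α, |ω u v| ≤ C' := fun u v =>
    le_trans (hCw u v) (le_max_left _ _)
  have hcoc : ∀ u v w : FreeGroup α, ω u (v * w) - ω u v = ω (u * v) w - ω v w := by
    intro u v w
    rw [hωeq]
    simp only [d1]
    rw [← mul_assoc]
    ring
  refine ⟨11 * (dec.R : ℝ) * B' * C' + 1, by positivity, ?_⟩
  intro g h i d hpath
  obtain ⟨t₁, t₂, h1, h2, hr1, hr2, hr3⟩ := hpath
  -- piece facts for φ
  have hφp : ∀ x : FreeGroup α, ∀ p ∈ dec.D x, φ p = lam p := by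
    intro x p hp
    rw [hφeq]
    unfold decQM
    rw [StmtAux.D_piece dec hp, List.map_singleton, List.sum_singleton]
  have hφinv : ∀ x : FreeGroup α, ∀ p ∈ dec.D x, φ p⁻¹ = -φ p := by
    intro x p hp
    have hp1 : dec.D p⁻¹ = [p⁻¹] := by
      rw [dec.inv_eq p, StmtAux.D_piece dec hp]
      simp [seqInv]
    have hplam : φ p⁻¹ = lam p⁻¹ := by
      rw [hφeq]; unfold decQM; rw [hp1, List.map_singleton, List.sum_singleton]
    rw [hplam, hlamsym p (dec.mem_pieces x p hp), hφp x p hp]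
  have hφbd : ∀ x : FreeGroup α, ∀ p ∈ dec.D x, |φ p| ≤ B' := by
    intro x p hp
    rw [hφp x p hp]
    exact le_trans (hB p (dec.mem_pieces x p hp)) (le_max_left _ _)
  -- Step 1 : the exact cocycle identity
  have hsumφ : ((dec.D g).map φ).sum = φ g := by
    have hmap : (dec.D g).map φ = (dec.D g).map lam :=
      List.map_congr_left (fun p hp => hφp g p hp)
    rw [hmap, hφeq]; rfl
  have hstep1 := StmtAux.zetaL_cocycle φ ω hcoc (dec.D g) h i
  rw [hsumφ] at hstep1
  -- triangle decompositions for the pair (g,h)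
  have Dg2 : dec.D g = cSeq1 dec.D g h ++ rSeq1 dec.D g h ++ seqInv (cSeq2 dec.D g h) :=
    dec.triangle₁ g h
  have Dh2 : dec.D h = cSeq2 dec.D g h ++ rSeq2 dec.D g h ++ seqInv (cSeq3 dec.D g h) :=
    dec.triangle₂ g h
  have Dgh2 : dec.D (g * h) = cSeq1 dec.D g h ++ seqInv (rSeq3 dec.D g h)
      ++ seqInv (cSeq3 dec.D g h) := by
    have hDgh : dec.D (g * h) = seqInv (dec.D (g * h)⁻¹) := by
      rw [dec.inv_eq, StmtAux.seqInv_seqInv]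
    have h3 := dec.triangle₃ g h
    have hinv : (g * h)⁻¹ = h⁻¹ * g⁻¹ := by group
    rw [hDgh, hinv, h3, StmtAux.seqInv_append, StmtAux.seqInv_append, StmtAux.seqInv_seqInv, List.append_assoc]
  -- product identities
  have hgp : (cSeq1 dec.D g h).prod * (rSeq1 dec.D g h).prod
      * (seqInv (cSeq2 dec.D g h)).prod = g := by
    rw [← List.prod_append, ← List.prod_append, ← Dg2, dec.prod_eq]
  have hhp : (cSeq2 dec.D g h).prod * (rSeq2 dec.D g h).prod
      * (seqInv (cSeq3 dec.D g h)).prod = h := by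
    rw [← List.prod_append, ← List.prod_append, ← Dh2, dec.prod_eq]
  have hghp : (cSeq1 dec.D g h).prod * (seqInv (rSeq3 dec.D g h)).prod
      * (seqInv (cSeq3 dec.D g h)).prod = g * h := by
    rw [← List.prod_append, ← List.prod_append, ← Dgh2, dec.prod_eq]
  -- argument identities
  have Eb : (rSeq2 dec.D g h).prod * ((seqInv (cSeq3 dec.D g h)).prod * 1)
      = (seqInv (cSeq2 dec.D g h)).prod * h := by
    calc (rSeq2 dec.D g h).prod * ((seqInv (cSeq3 dec.D g h)).prod * 1)
        = ((cSeq2 dec.D g h).prod)⁻¹ * ((cSeq2 dec.D g h).prod * (rSeq2 dec.D g h).prod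
            * (seqInv (cSeq3 dec.D g h)).prod) := by group
      _ = ((cSeq2 dec.D g h).prod)⁻¹ * h := by rw [hhp]
      _ = (seqInv (cSeq2 dec.D g h)).prod * h := by rw [StmtAux.seqInv_prod]
  have EA : (rSeq1 dec.D g h).prod * ((seqInv (cSeq2 dec.D g h)).prod * h)
      = (seqInv (rSeq3 dec.D g h)).prod * ((seqInv (cSeq3 dec.D g h)).prod * 1) := by
    have e1 : (cSeq1 dec.D g h).prod *
        ((rSeq1 dec.D g h).prod * ((seqInv (cSeq2 dec.D g h)).prod * h)) = g * h := by
      calc (cSeq1 dec.D g h).prod *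
            ((rSeq1 dec.D g h).prod * ((seqInv (cSeq2 dec.D g h)).prod * h))
          = ((cSeq1 dec.D g h).prod * (rSeq1 dec.D g h).prod
              * (seqInv (cSeq2 dec.D g h)).prod) * h := by group
        _ = g * h := by rw [hgp]
    have e2 : (cSeq1 dec.D g h).prod *
        ((seqInv (rSeq3 dec.D g h)).prod * ((seqInv (cSeq3 dec.D g h)).prod * 1)) = g * h := by
      calc (cSeq1 dec.D g h).prod *
            ((seqInv (rSeq3 dec.D g h)).prod * ((seqInv (cSeq3 dec.D g h)).prod * 1))
          = (cSeq1 dec.D g h).prod * (seqInv (rSeq3 dec.D g h)).prod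
              * (seqInv (cSeq3 dec.D g h)).prod := by group
        _ = g * h := by rw [hghp]
    exact mul_left_cancel (e1.trans e2.symm)
  -- zetaL splittings
  have ηh : zetaL (fun p u v => φ p * ω u v) (dec.D h) 1 i
      = zetaL (fun p u v => φ p * ω u v) (cSeq2 dec.D g h)
          ((seqInv (cSeq2 dec.D g h)).prod * h) i
        + zetaL (fun p u v => φ p * ω u v) (rSeq2 dec.D g h)
            ((seqInv (cSeq3 dec.D g h)).prod * 1) i
        + zetaL (fun p u v => φ p * ω u v) (seqInv (cSeq3 dec.D g h)) 1 i := by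
    rw [Dh2, StmtAux.zetaL_append, StmtAux.zetaL_append, Eb]
  have ηgh : zetaL (fun p u v => φ p * ω u v) (dec.D (g * h)) 1 i
      = zetaL (fun p u v => φ p * ω u v) (cSeq1 dec.D g h)
          ((seqInv (rSeq3 dec.D g h)).prod * ((seqInv (cSeq3 dec.D g h)).prod * 1)) i
        + zetaL (fun p u v => φ p * ω u v) (seqInv (rSeq3 dec.D g h))
            ((seqInv (cSeq3 dec.D g h)).prod * 1) i
        + zetaL (fun p u v => φ p * ω u v) (seqInv (cSeq3 dec.D g h)) 1 i := by
    rw [Dgh2, StmtAux.zetaL_append, StmtAux.zetaL_append]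
  have ζgsplit : zetaL (fun p u v => φ p * ω u v) (dec.D g) h i
      = zetaL (fun p u v => φ p * ω u v) (cSeq1 dec.D g h)
          ((seqInv (rSeq3 dec.D g h)).prod * ((seqInv (cSeq3 dec.D g h)).prod * 1)) i
        + zetaL (fun p u v => φ p * ω u v) (rSeq1 dec.D g h)
            ((seqInv (cSeq2 dec.D g h)).prod * h) i
        + zetaL (fun p u v => φ p * ω u v) (seqInv (cSeq2 dec.D g h)) h i := by
    rw [Dg2, StmtAux.zetaL_append, StmtAux.zetaL_append, EA]
  -- pairSum conversions
  have Td : zetaL (fun p u v => φ p * ω u v) (dec.D d) h i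
      + zetaL (fun p u v => φ p * ω u v) (seqInv (dec.D d)) (d * h) i
      = StmtAux.pairSum φ ω h i (dec.D d) := by
    have harg : (dec.D d).prod * h = d * h := by rw [dec.prod_eq]
    have hTd := StmtAux.pairSum_eq φ ω (l := dec.D d)
      (fun p hp => hφinv d p hp) h i
    rwa [harg] at hTd
  have Td' : zetaL (fun p u v => φ p * ω u v) (seqInv (cSeq2 dec.D g h)) h i
      + zetaL (fun p u v => φ p * ω u v) (cSeq2 dec.D g h)
          ((seqInv (cSeq2 dec.D g h)).prod * h) i
      = StmtAux.pairSum φ ω h i (seqInv (cSeq2 dec.D g h)) := by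
    have hmem : ∀ p ∈ seqInv (cSeq2 dec.D g h), φ p⁻¹ = -φ p := by
      intro p hp
      exact hφinv g p (by rw [Dg2]; exact List.mem_append_right _ hp)
    have hTd' := StmtAux.pairSum_eq φ ω (l := seqInv (cSeq2 dec.D g h)) hmem h i
    rwa [StmtAux.seqInv_seqInv] at hTd'
  -- the key identity
  have hgoal : φ g * ω h i + d2 (fun a b => zetaD dec.D φ ω a 1 b) g h i -
      (zetaD dec.D φ ω d h i + zetaD dec.D φ ω d⁻¹ (d * h) i)
      = (StmtAux.pairSum φ ω h i (seqInv (cSeq2 dec.D g h))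
          - StmtAux.pairSum φ ω h i (dec.D d))
        + (zetaL (fun p u v => φ p * ω u v) (rSeq2 dec.D g h)
              ((seqInv (cSeq3 dec.D g h)).prod * 1) i
            + zetaL (fun p u v => φ p * ω u v) (rSeq1 dec.D g h)
                ((seqInv (cSeq2 dec.D g h)).prod * h) i
            - zetaL (fun p u v => φ p * ω u v) (seqInv (rSeq3 dec.D g h))
                ((seqInv (cSeq3 dec.D g h)).prod * 1) i) := by
    simp only [d2, zetaD, dec.inv_eq d]
    linarith [hstep1, ηh, ηgh, ζgsplit, Td, Td']
  rw [hgoal]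
  -- bounds
  obtain ⟨F, F', G, hFd, hF'b, hFlen, hF'len⟩ :=
    StmtAux.tail_decomp dec h1 h2 hr1 hr2 hr3
  have hRcast : ((2 * dec.R : ℕ) : ℝ) = 2 * (dec.R : ℝ) := by push_cast; ring
  have hbd1 : |StmtAux.pairSum φ ω h i (dec.D d) - StmtAux.pairSum φ ω h i G|
      ≤ 2 * (dec.R : ℝ) * (2 * B' * C') := by
    rw [hFd]
    have hb := StmtAux.pairSum_append_bound φ ω hB'0 hC'0
      (l₁ := F) (l₂ := G)
      (fun p hp => hφbd d p (by rw [hFd]; exact List.mem_append_left _ hp)) hωle h i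
    refine le_trans hb ?_
    have hcast : (F.length : ℝ) ≤ 2 * (dec.R : ℝ) := by
      rw [← hRcast]; exact_mod_cast hFlen
    exact mul_le_mul_of_nonneg_right hcast
      (by have := mul_nonneg hB'0 hC'0; linarith)
  have hbd2 : |StmtAux.pairSum φ ω h i (seqInv (cSeq2 dec.D g h)) - StmtAux.pairSum φ ω h i G|
      ≤ 2 * (dec.R : ℝ) * (2 * B' * C') := by
    rw [hF'b]
    have hb := StmtAux.pairSum_append_bound φ ω hB'0 hC'0
      (l₁ := F') (l₂ := G)
      (fun p hp => hφbd g p (by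
        rw [Dg2]
        refine List.mem_append_right _ ?_
        rw [hF'b]
        exact List.mem_append_left _ hp)) hωle h i
    refine le_trans hb ?_
    have hcast : (F'.length : ℝ) ≤ 2 * (dec.R : ℝ) := by
      rw [← hRcast]; exact_mod_cast hF'len
    exact mul_le_mul_of_nonneg_right hcast
      (by have := mul_nonneg hB'0 hC'0; linarith)
  have hbd3 : |zetaL (fun p u v => φ p * ω u v) (rSeq2 dec.D g h)
      ((seqInv (cSeq3 dec.D g h)).prod * 1) i| ≤ (dec.R : ℝ) * (B' * C') := by
    have hb := StmtAux.zetaL_bound φ ω hC'0 (l := rSeq2 dec.D g h)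
      (fun p hp => hφbd h p (by
        rw [Dh2]
        exact List.mem_append_left _ (List.mem_append_right _ hp))) hωle
      ((seqInv (cSeq3 dec.D g h)).prod * 1) i
    refine le_trans hb ?_
    have hcast : ((rSeq2 dec.D g h).length : ℝ) ≤ (dec.R : ℝ) := by
      exact_mod_cast dec.rBound₂ g h
    exact mul_le_mul_of_nonneg_right hcast (mul_nonneg hB'0 hC'0)
  have hbd4 : |zetaL (fun p u v => φ p * ω u v) (rSeq1 dec.D g h)
      ((seqInv (cSeq2 dec.D g h)).prod * h) i| ≤ (dec.R : ℝ) * (B' * C') := by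
    have hb := StmtAux.zetaL_bound φ ω hC'0 (l := rSeq1 dec.D g h)
      (fun p hp => hφbd g p (by
        rw [Dg2]
        exact List.mem_append_left _ (List.mem_append_right _ hp))) hωle
      ((seqInv (cSeq2 dec.D g h)).prod * h) i
    refine le_trans hb ?_
    have hcast : ((rSeq1 dec.D g h).length : ℝ) ≤ (dec.R : ℝ) := by
      exact_mod_cast dec.rBound₁ g h
    exact mul_le_mul_of_nonneg_right hcast (mul_nonneg hB'0 hC'0)
  have hbd5 : |zetaL (fun p u v => φ p * ω u v) (seqInv (rSeq3 dec.D g h))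
      ((seqInv (cSeq3 dec.D g h)).prod * 1) i| ≤ (dec.R : ℝ) * (B' * C') := by
    have hb := StmtAux.zetaL_bound φ ω hC'0 (l := seqInv (rSeq3 dec.D g h))
      (fun p hp => hφbd (g * h) p (by
        rw [Dgh2]
        exact List.mem_append_left _ (List.mem_append_right _ hp))) hωle
      ((seqInv (cSeq3 dec.D g h)).prod * 1) i
    refine le_trans hb ?_
    have hcast : ((seqInv (rSeq3 dec.D g h)).length : ℝ) ≤ (dec.R : ℝ) := by
      rw [StmtAux.seqInv_length]
      exact_mod_cast dec.rBound₃ g h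
    exact mul_le_mul_of_nonneg_right hcast (mul_nonneg hB'0 hC'0)
  -- assemble
  have tri1 : |StmtAux.pairSum φ ω h i (seqInv (cSeq2 dec.D g h))
      - StmtAux.pairSum φ ω h i (dec.D d)|
      ≤ |StmtAux.pairSum φ ω h i (seqInv (cSeq2 dec.D g h)) - StmtAux.pairSum φ ω h i G|
        + |StmtAux.pairSum φ ω h i (dec.D d) - StmtAux.pairSum φ ω h i G| := by
    have heq : StmtAux.pairSum φ ω h i (seqInv (cSeq2 dec.D g h))
        - StmtAux.pairSum φ ω h i (dec.D d)
        = (StmtAux.pairSum φ ω h i (seqInv (cSeq2 dec.D g h)) - StmtAux.pairSum φ ω h i G)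
          - (StmtAux.pairSum φ ω h i (dec.D d) - StmtAux.pairSum φ ω h i G) := by ring
    rw [heq]
    exact abs_sub _ _
  have tri2 := abs_add_le
    (StmtAux.pairSum φ ω h i (seqInv (cSeq2 dec.D g h)) - StmtAux.pairSum φ ω h i (dec.D d))
    (zetaL (fun p u v => φ p * ω u v) (rSeq2 dec.D g h)
        ((seqInv (cSeq3 dec.D g h)).prod * 1) i
      + zetaL (fun p u v => φ p * ω u v) (rSeq1 dec.D g h)
          ((seqInv (cSeq2 dec.D g h)).prod * h) i
      - zetaL (fun p u v => φ p * ω u v) (seqInv (rSeq3 dec.D g h))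
          ((seqInv (cSeq3 dec.D g h)).prod * 1) i)
  have tri3 : |zetaL (fun p u v => φ p * ω u v) (rSeq2 dec.D g h)
        ((seqInv (cSeq3 dec.D g h)).prod * 1) i
      + zetaL (fun p u v => φ p * ω u v) (rSeq1 dec.D g h)
          ((seqInv (cSeq2 dec.D g h)).prod * h) i
      - zetaL (fun p u v => φ p * ω u v) (seqInv (rSeq3 dec.D g h))
          ((seqInv (cSeq3 dec.D g h)).prod * 1) i|
      ≤ |zetaL (fun p u v => φ p * ω u v) (rSeq2 dec.D g h)
          ((seqInv (cSeq3 dec.D g h)).prod * 1) i|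
        + |zetaL (fun p u v => φ p * ω u v) (rSeq1 dec.D g h)
            ((seqInv (cSeq2 dec.D g h)).prod * h) i|
        + |zetaL (fun p u v => φ p * ω u v) (seqInv (rSeq3 dec.D g h))
            ((seqInv (cSeq3 dec.D g h)).prod * 1) i| := by
    refine le_trans (abs_sub _ _) ?_
    have habs := abs_add_le
      (zetaL (fun p u v => φ p * ω u v) (rSeq2 dec.D g h)
        ((seqInv (cSeq3 dec.D g h)).prod * 1) i)
      (zetaL (fun p u v => φ p * ω u v) (rSeq1 dec.D g h)
          ((seqInv (cSeq2 dec.D g h)).prod * h) i)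
    linarith
  linarith [tri1, tri2, tri3, hbd1, hbd2, hbd3, hbd4, hbd5]
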